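/- For the Round-Robin mechanism with two agents, every pure Nash equilibrium bid profile induces an allocation that is EF1 with respect to the agents' true additive valuations. -/

import Mathlib

open Finset

/-- Pick the available good with the highest bid, ties broken lexicographically
(i.e. in favor of the smaller index). -/
noncomputable def rrPick {m : ℕ} (bid : Fin m → ℝ) (S : Finset (Fin m)) : Option (Fin m) :=
  if h : S.Nonempty then
    some (S.exists_max_image (fun g => toLex (bid g, OrderDual.toDual g)) h).choose
  else none

/-- The state of Round-Robin (available goods, partial allocation) after `t` picks:
at step `t` the active agent is `t % n` and she picks her highest-bid available good. -/
noncomputable def rrState (n : ℕ) [NeZero n] {m : ℕ} (b : Fin n → Fin m → ℝ) :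
    ℕ → Finset (Fin m) × (Fin n → Finset (Fin m))
  | 0 => (Finset.univ, fun _ => ∅)
  | (t + 1) =>
    let p := rrState n b t
    let i : Fin n := ⟨t % n, Nat.mod_lt t (Nat.pos_of_ne_zero (NeZero.ne n))⟩
    match rrPick (b i) p.1 with
    | none => p
    | some g => (p.1.erase g, Function.update p.2 i (insert g (p.2 i)))

/-- The allocation output by the Round-Robin mechanism on bid profile `b`. -/
noncomputable def roundRobin (n : ℕ) [NeZero n] {m : ℕ} (b : Fin n → Fin m → ℝ) :
    Fin n → Finset (Fin m) :=
  (rrState n b m).2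

lemma rrPick_spec {m : ℕ} (bid : Fin m → ℝ) (S : Finset (Fin m)) (h : S.Nonempty) :
    ∃ g, rrPick bid S = some g ∧ g ∈ S ∧ ∀ x ∈ S, bid x ≤ bid g := by
  obtain ⟨h1, h2⟩ := (S.exists_max_image (fun g => toLex (bid g, OrderDual.toDual g)) h).choose_spec
  refine ⟨_, by rw [rrPick, dif_pos h], h1, fun x hx => ?_⟩
  have := h2 x hx
  rcases Prod.Lex.le_iff.1 this with h' | ⟨h', _⟩
  · exact h'.le
  · exact h'.le
lemma rrPick_none {m : ℕ} (bid : Fin m → ℝ) (S : Finset (Fin m)) (h : ¬ S.Nonempty) :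
    rrPick bid S = none := by rw [rrPick, dif_neg h]
def rrAct (t : ℕ) : Fin 2 := ⟨t % 2, by omega⟩
lemma rrState_succ_none {m : ℕ} (b : Fin 2 → Fin m → ℝ) (t : ℕ)
    (h : rrPick (b (rrAct t)) (rrState 2 b t).1 = none) :
    rrState 2 b (t + 1) = rrState 2 b t := by
  have e : rrAct t = ⟨t % 2, Nat.mod_lt t (Nat.pos_of_ne_zero (NeZero.ne 2))⟩ := rfl
  rw [e] at h; rw [rrState]; simp [h]
lemma rrState_succ_some {m : ℕ} (b : Fin 2 → Fin m → ℝ) (t : ℕ) (g : Fin m)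
    (h : rrPick (b (rrAct t)) (rrState 2 b t).1 = some g) :
    rrState 2 b (t + 1) = ((rrState 2 b t).1.erase g,
      Function.update (rrState 2 b t).2 (rrAct t)
        (insert g ((rrState 2 b t).2 (rrAct t)))) := by
  have e : rrAct t = ⟨t % 2, Nat.mod_lt t (Nat.pos_of_ne_zero (NeZero.ne 2))⟩ := rfl
  rw [e] at h ⊢; rw [rrState]; simp [h]

lemma rr_card {m : ℕ} (b : Fin 2 → Fin m → ℝ) : ∀ t, ((rrState 2 b t).1).card = m - t := by
  intro t
  induction t with
  | zero => simp [rrState]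
  | succ t ih =>
    by_cases h : ((rrState 2 b t).1).Nonempty
    · obtain ⟨g, hp, hg, -⟩ := rrPick_spec (b (rrAct t)) _ h
      rw [rrState_succ_some b t g hp]
      simp only
      rw [card_erase_of_mem hg, ih]
      omega
    · rw [rrState_succ_none b t (rrPick_none _ _ h)]
      rw [ih]
      rw [not_nonempty_iff_eq_empty] at h
      have : m - t = 0 := by rw [← ih, h]; simp
      omega

lemma rr_nonempty {m : ℕ} (b : Fin 2 → Fin m → ℝ) {t : ℕ} (h : t < m) :
    ((rrState 2 b t).1).Nonempty := by
  rw [← card_pos, rr_card]; omega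

lemma rr_stable {m : ℕ} (b : Fin 2 → Fin m → ℝ) : ∀ t, m ≤ t → rrState 2 b t = rrState 2 b m := by
  intro t
  induction t with
  | zero => intro h; simp_all
  | succ t ih =>
    intro h
    rcases Nat.lt_or_ge m (t+1) with h' | h'
    · have hm : m ≤ t := by omega
      have he : ¬ ((rrState 2 b t).1).Nonempty := by
        rw [not_nonempty_iff_eq_empty, ← card_eq_zero, rr_card]; omega
      rw [rrState_succ_none b t (rrPick_none _ _ he), ih hm]
    · have : t + 1 = m := by omega
      rw [this]

-- NEW: monotonicity and invariant
lemma rr_bundle_succ {m : ℕ} (b : Fin 2 → Fin m → ℝ) (t : ℕ) (k : Fin 2) :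
    (rrState 2 b t).2 k ⊆ (rrState 2 b (t+1)).2 k := by
  by_cases h : ((rrState 2 b t).1).Nonempty
  · obtain ⟨g, hp, -, -⟩ := rrPick_spec (b (rrAct t)) _ h
    rw [rrState_succ_some b t g hp]
    simp only [Function.update]
    by_cases hk : k = rrAct t
    · subst hk; simp
    · simp [hk]
  · rw [rrState_succ_none b t (rrPick_none _ _ h)]

lemma rr_bundle_mono {m : ℕ} (b : Fin 2 → Fin m → ℝ) (k : Fin 2) {s t : ℕ} (h : s ≤ t) :
    (rrState 2 b s).2 k ⊆ (rrState 2 b t).2 k := by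
  induction t with
  | zero => simp_all
  | succ t ih =>
    rcases Nat.lt_or_ge s (t+1) with h' | h'
    · exact (ih (by omega)).trans (rr_bundle_succ b t k)
    · have : s = t + 1 := by omega
      subst this; exact subset_rfl

def rrInv {m : ℕ} (b : Fin 2 → Fin m → ℝ) (t : ℕ) : Prop :=
  ∀ x : Fin m, (x ∈ (rrState 2 b t).1 ↔ (x ∉ (rrState 2 b t).2 0 ∧ x ∉ (rrState 2 b t).2 1)) ∧
    ¬(x ∈ (rrState 2 b t).2 0 ∧ x ∈ (rrState 2 b t).2 1)

lemma rr_inv {m : ℕ} (b : Fin 2 → Fin m → ℝ) : ∀ t, rrInv b t := by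
  intro t
  induction t with
  | zero => intro x; simp [rrInv, rrState]
  | succ t ih =>
    by_cases h : ((rrState 2 b t).1).Nonempty
    · obtain ⟨g, hp, hg, -⟩ := rrPick_spec (b (rrAct t)) _ h
      intro x
      rw [rrState_succ_some b t g hp]
      obtain ⟨ihx1, ihx2⟩ := ih x
      obtain ⟨ihg1, ihg2⟩ := ih g
      have hg0 : g ∉ (rrState 2 b t).2 0 := (ihg1.1 hg).1
      have hg1 : g ∉ (rrState 2 b t).2 1 := (ihg1.1 hg).2
      rcases (by decide : ∀ a : Fin 2, a = 0 ∨ a = 1) (rrAct t) with ha | ha <;>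
        rw [ha] <;>
        by_cases hxg : x = g
      · subst hxg
        simp only [Function.update_apply, mem_erase, mem_insert]
        norm_num [hg, hg0, hg1]
      · simp only [Function.update_apply, mem_erase, mem_insert]
        norm_num [hxg]
        tauto
      · subst hxg
        simp only [Function.update_apply, mem_erase, mem_insert]
        norm_num [hg, hg0, hg1]
      · simp only [Function.update_apply, mem_erase, mem_insert]
        norm_num [hxg]
        tauto
    · unfold rrInv
      rw [rrState_succ_none b t (rrPick_none _ _ h)]; exact ih

lemma rr_not_bundle {m : ℕ} (b : Fin 2 → Fin m → ℝ) {t : ℕ} {g : Fin m}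
    (hg : g ∈ (rrState 2 b t).1) (k : Fin 2) : g ∉ (rrState 2 b t).2 k := by
  obtain ⟨h1, -⟩ := rr_inv b t g
  rcases (by decide : ∀ a : Fin 2, a = 0 ∨ a = 1) k with rfl | rfl
  · exact (h1.1 hg).1
  · exact (h1.1 hg).2

lemma rr_avail_empty {m : ℕ} (b : Fin 2 → Fin m → ℝ) : (rrState 2 b m).1 = ∅ := by
  rw [← card_eq_zero, rr_card]; omega

lemma rr_partition {m : ℕ} (b : Fin 2 → Fin m → ℝ) (w : Fin m → ℝ) :
    ∑ x ∈ (rrState 2 b m).2 0, w x + ∑ x ∈ (rrState 2 b m).2 1, w x = ∑ x : Fin m, w x := by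
  have hd : Disjoint ((rrState 2 b m).2 0) ((rrState 2 b m).2 1) := by
    rw [disjoint_left]
    intro a ha ha'
    exact (rr_inv b m a).2 ⟨ha, ha'⟩
  have hu : (rrState 2 b m).2 0 ∪ (rrState 2 b m).2 1 = univ := by
    ext x
    have h1 := (rr_inv b m x).1
    rw [rr_avail_empty] at h1
    simp only [notMem_empty, false_iff, not_and, not_not] at h1
    simp only [mem_union, mem_univ, iff_true]
    by_cases h : x ∈ (rrState 2 b m).2 0
    · exact Or.inl h
    · exact Or.inr (by tauto)
  rw [← sum_union hd, hu]

lemma rr_key {m : ℕ} (b : Fin 2 → Fin m → ℝ) (i j : Fin 2) (hij : j ≠ i) (w : Fin m → ℝ)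
    (hw : ∀ g, 0 ≤ w g) (hbi : b i = w) :
    ∀ k t, m ≤ t + k → t % 2 = i.val →
      ∑ x ∈ (rrState 2 b m).2 j, w x - ∑ x ∈ (rrState 2 b t).2 j, w x ≤
        ∑ x ∈ (rrState 2 b m).2 i, w x - ∑ x ∈ (rrState 2 b t).2 i, w x := by
  intro k
  induction k with
  | zero =>
    intro t hm _
    rw [rr_stable b t (by omega)]
    simp
  | succ k ih =>
    intro t hm ht
    rcases le_or_gt m t with h' | h'
    · rw [rr_stable b t h']; simp
    · have hact : rrAct t = i := by
        apply Fin.ext; simpa [rrAct] using ht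
      obtain ⟨g, hp, hgA, hgmax⟩ := rrPick_spec (b (rrAct t)) _ (rr_nonempty b h')
      have hSs := rrState_succ_some b t g hp
      have hgi : g ∉ (rrState 2 b t).2 i := rr_not_bundle b hgA i
      have S1i : ∑ x ∈ (rrState 2 b (t+1)).2 i, w x = w g + ∑ x ∈ (rrState 2 b t).2 i, w x := by
        rw [hSs, hact]
        simp only [Function.update_self]
        rw [sum_insert hgi]
      have S1j : (rrState 2 b (t+1)).2 j = (rrState 2 b t).2 j := by
        rw [hSs, hact]
        exact Function.update_of_ne hij _ _
      rcases le_or_gt m (t+1) with h2 | h2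
      · have hstab := rr_stable b (t+1) h2
        rw [← hstab, S1j, S1i]
        linarith [hw g]
      · have hactj : rrAct (t+1) = j := by
          apply Fin.ext
          have hji : j.val ≠ i.val := fun h => hij (Fin.ext h)
          have : j.val < 2 := j.isLt
          have : i.val < 2 := i.isLt
          simp only [rrAct]
          omega
        obtain ⟨h2g, hp2, hg2A, -⟩ := rrPick_spec (b (rrAct (t+1))) _ (rr_nonempty b h2)
        have hle : w h2g ≤ w g := by
          have : h2g ∈ (rrState 2 b t).1 := by
            rw [hSs] at hg2A
            exact mem_of_mem_erase hg2A
          have := hgmax h2g this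
          rwa [hact, hbi] at this
        have hg2j : h2g ∉ (rrState 2 b (t+1)).2 j := rr_not_bundle b hg2A j
        have hSs2 := rrState_succ_some b (t+1) h2g hp2
        have S2j : ∑ x ∈ (rrState 2 b (t+2)).2 j, w x
            = w h2g + ∑ x ∈ (rrState 2 b (t+1)).2 j, w x := by
          rw [show t + 2 = (t+1) + 1 from rfl, hSs2, hactj]
          simp only [Function.update_self]
          rw [sum_insert hg2j]
        have S2i : (rrState 2 b (t+2)).2 i = (rrState 2 b (t+1)).2 i := by
          rw [show t + 2 = (t+1) + 1 from rfl, hSs2, hactj]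
          exact Function.update_of_ne (fun h => hij h.symm) _ _
        have hIH := ih (t+2) (by omega) (by omega)
        rw [S2j, S1j, S2i] at hIH
        linarith [S1i, hIH]

/-- every pure Nash equilibrium of Round-Robin with two agents induces an
allocation that is EF1 with respect to the true valuations. -/
theorem roundRobin_two_agents_PNE_EF1 {m : ℕ} (v b : Fin 2 → Fin m → ℝ)
    (hv : ∀ i g, 0 ≤ v i g) (hb : ∀ i g, 0 ≤ b i g)
    (hPNE : ∀ i : Fin 2, ∀ b' : Fin m → ℝ, (∀ g, 0 ≤ b' g) →
      ∑ g ∈ roundRobin 2 (Function.update b i b') i, v i g ≤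
        ∑ g ∈ roundRobin 2 b i, v i g) :
    ∀ i j : Fin 2, (roundRobin 2 b j).Nonempty →
      ∃ g ∈ roundRobin 2 b j,
        ∑ x ∈ (roundRobin 2 b j).erase g, v i x ≤ ∑ x ∈ roundRobin 2 b i, v i x := by
  have same : ∀ (i : Fin 2) (hne : (roundRobin 2 b i).Nonempty),
      ∃ g ∈ roundRobin 2 b i,
        ∑ x ∈ (roundRobin 2 b i).erase g, v i x ≤ ∑ x ∈ roundRobin 2 b i, v i x := by
    intro i ⟨g, hg⟩
    exact ⟨g, hg, sum_le_sum_of_subset_of_nonneg (erase_subset _ _) (fun x hx _ => hv i x)⟩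
  intro i j
  fin_cases i <;> fin_cases j
  · exact same 0
  · -- i = 0, j = 1
    intro hne
    obtain ⟨g0, hg0⟩ := hne
    set D := Function.update b 0 (v 0) with hD
    have hD0 : D 0 = v 0 := Function.update_self _ _ _
    have key := rr_key D 0 1 (by decide) (v 0) (hv 0) hD0 m 0 (by omega) rfl
    have h00 : rrState 2 D 0 = (univ, fun _ => ∅) := by rw [rrState]
    rw [h00] at key
    simp only [sum_empty, sub_zero] at key
    have partD := rr_partition D (v 0)
    have partB := rr_partition b (v 0)
    have hNE := hPNE 0 (v 0) (hv 0)
    simp only [roundRobin, ← hD] at hNE ⊢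
    refine ⟨g0, hg0, ?_⟩
    have hsub : ∑ x ∈ ((rrState 2 b m).2 1).erase g0, v 0 x ≤ ∑ x ∈ (rrState 2 b m).2 1, v 0 x :=
      sum_le_sum_of_subset_of_nonneg (erase_subset _ _) (fun x hx _ => hv 0 x)
    show ∑ x ∈ ((rrState 2 b m).2 1).erase g0, v 0 x ≤ ∑ x ∈ (rrState 2 b m).2 0, v 0 x
    linarith
  · -- i = 1, j = 0
    intro hne
    obtain ⟨x0, hx0⟩ := hne
    have hm : 0 < m := x0.pos
    set D := Function.update b 1 (v 1) with hD
    have hD1 : D 1 = v 1 := Function.update_self _ _ _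
    have hDb0 : D 0 = b 0 := Function.update_of_ne (by decide) _ _
    have huniv : (univ : Finset (Fin m)).Nonempty := ⟨x0, mem_univ x0⟩
    obtain ⟨c0, hc0p, -, -⟩ := rrPick_spec (b 0) univ huniv
    have ha0 : rrAct 0 = 0 := rfl
    have h0b : rrState 2 b 0 = (univ, fun _ => ∅) := by rw [rrState]
    have h0D : rrState 2 D 0 = (univ, fun _ => ∅) := by rw [rrState]
    -- state at time 1, equilibrium run
    have hb1 := rrState_succ_some b 0 c0 (by rw [ha0, h0b]; exact hc0p)
    have hc0mem : c0 ∈ (rrState 2 b 1).2 0 := by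
      rw [hb1, ha0, h0b]
      simp [Function.update_self]
    have hc0A : c0 ∈ (rrState 2 b m).2 0 := rr_bundle_mono b 0 hm hc0mem
    -- state at time 1, deviation run
    have hD1s := rrState_succ_some D 0 c0 (by rw [ha0, h0D, hDb0]; exact hc0p)
    have hD1s0 : (rrState 2 D 1).2 0 = {c0} := by
      rw [hD1s, ha0, h0D]
      simp [Function.update_self]
    have hD1s1 : (rrState 2 D 1).2 1 = ∅ := by
      rw [hD1s, ha0, h0D]
      simp [Function.update_of_ne]
    have key := rr_key D 1 0 (by decide) (v 1) (hv 1) hD1 m 1 (by omega) rfl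
    rw [hD1s0, hD1s1] at key
    simp only [sum_singleton, sum_empty, sub_zero] at key
    have partD := rr_partition D (v 1)
    have partB := rr_partition b (v 1)
    have hNE := hPNE 1 (v 1) (hv 1)
    simp only [roundRobin, ← hD] at hNE ⊢
    refine ⟨c0, hc0A, ?_⟩
    have herase : ∑ x ∈ ((rrState 2 b m).2 0).erase c0, v 1 x + v 1 c0
        = ∑ x ∈ (rrState 2 b m).2 0, v 1 x := sum_erase_add _ _ hc0A
    show ∑ x ∈ ((rrState 2 b m).2 0).erase c0, v 1 x ≤ ∑ x ∈ (rrState 2 b m).2 1, v 1 x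
    linarith
  · exact same 1
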